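/- Let S be a finite set. Ties on S (pairs (S₀, P) of a subset S₀ ⊆ S of untied elements and a partition P of S∖S₀ into nonempty blocks) with the composition (T₀,Q)∘(S₀,P) := (S₀∩T₀, the set of nonempty intersections A∩B with A ∈ P∪{S₀}, B ∈ Q∪{T₀}, (A,B) ≠ (S₀,T₀)) form a monoid with identity (S, ∅). -/

import Mathlib

/-- The data of a tie on a finite set `S`: a set `S₀` of untied elements together with
a collection of blocks (intended to be a partition of `S ∖ S₀` into nonempty subsets). -/
def TieData (S : Type*) := Finset S × Finset (Finset S)

/-- `(S₀, P)` is a tie on `S`: the blocks of `P` are nonempty, disjoint from `S₀`, and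
every element outside `S₀` lies in exactly one block. -/
def IsTie {S : Type*} [DecidableEq S] [Fintype S] (p : TieData S) : Prop :=
  (∀ B ∈ p.2, B.Nonempty) ∧
  (∀ B ∈ p.2, ∀ x ∈ B, x ∉ p.1) ∧
  (∀ x : S, x ∉ p.1 → ∃! B, B ∈ p.2 ∧ x ∈ B)

/-- The composition `(T₀, Q) ∘ (S₀, P)` of ties: the untied part is `S₀ ∩ T₀` and the
blocks are the nonempty intersections `A ∩ B` with `A ∈ P ∪ {S₀}`, `B ∈ Q ∪ {T₀}` and
`(A, B) ≠ (S₀, T₀)`. -/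
def tieComp {S : Type*} [DecidableEq S] (q p : TieData S) : TieData S :=
  (p.1 ∩ q.1,
    ((((p.2 ∪ {p.1}) ×ˢ (q.2 ∪ {q.1})).filter (fun AB => AB ≠ (p.1, q.1))).image
        (fun AB => AB.1 ∩ AB.2)).filter (fun B => B.Nonempty))

section Aux

variable {S : Type*} [DecidableEq S] [Fintype S]

/-- The "extended block" of `x`: the untied part if `x` is untied, else the block of `x`. -/
noncomputable def blk (p : TieData S) (hp : IsTie p) (x : S) : Finset S :=
  if h : x ∈ p.1 then p.1 else (hp.2.2 x h).choose

lemma mem_blk (p : TieData S) (hp : IsTie p) (x : S) : x ∈ blk p hp x := by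
  unfold blk
  split
  · assumption
  · exact (hp.2.2 x ‹_›).choose_spec.1.2

lemma blk_mem (p : TieData S) (hp : IsTie p) (x : S) : blk p hp x ∈ p.2 ∪ {p.1} := by
  unfold blk
  split
  · simp
  · exact Finset.mem_union_left _ (hp.2.2 x ‹_›).choose_spec.1.1

lemma blk_of_not_mem (p : TieData S) (hp : IsTie p) {x : S} (h : x ∉ p.1) :
    blk p hp x ∈ p.2 := by
  unfold blk
  rw [dif_neg h]
  exact (hp.2.2 x h).choose_spec.1.1

lemma blk_untied (p : TieData S) (hp : IsTie p) {x : S} (h : x ∈ p.1) :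
    blk p hp x = p.1 := by
  unfold blk; rw [dif_pos h]

lemma blk_eq (p : TieData S) (hp : IsTie p) {x : S} {A : Finset S}
    (hA : A ∈ p.2 ∪ {p.1}) (hx : x ∈ A) : A = blk p hp x := by
  rcases Finset.mem_union.1 hA with h | h
  · have hxp : x ∉ p.1 := hp.2.1 A h x hx
    unfold blk
    rw [dif_neg hxp]
    exact (hp.2.2 x hxp).choose_spec.2 A ⟨h, hx⟩
  · have hA1 : A = p.1 := Finset.mem_singleton.1 h
    subst hA1
    exact (blk_untied p hp hx).symm

omit [Fintype S] in
lemma comp_fst (q p : TieData S) : (tieComp q p).1 = p.1 ∩ q.1 := rfl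

lemma mem_comp_iff (p q : TieData S) (hp : IsTie p) (hq : IsTie q) (C : Finset S) :
    C ∈ (tieComp q p).2 ↔
      ∃ x, x ∉ p.1 ∩ q.1 ∧ x ∈ C ∧ C = blk p hp x ∩ blk q hq x := by
  constructor
  · intro hC
    simp only [tieComp, Finset.mem_filter, Finset.mem_image] at hC
    obtain ⟨⟨AB, hAB, rfl⟩, hne⟩ := hC
    obtain ⟨hABp, hABne⟩ := hAB
    obtain ⟨hA, hB⟩ := Finset.mem_product.1 hABp
    obtain ⟨x, hx⟩ := hne
    have hx1 := Finset.mem_inter.1 hx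
    have eA : AB.1 = blk p hp x := blk_eq p hp hA hx1.1
    have eB : AB.2 = blk q hq x := blk_eq q hq hB hx1.2
    refine ⟨x, ?_, hx, by rw [eA, eB]⟩
    intro hxpq
    have hxpq' := Finset.mem_inter.1 hxpq
    apply hABne
    have e1 : AB.1 = p.1 := by rw [eA, blk_untied p hp hxpq'.1]
    have e2 : AB.2 = q.1 := by rw [eB, blk_untied q hq hxpq'.2]
    exact Prod.ext e1 e2
  · rintro ⟨x, hx, hxC, rfl⟩
    simp only [tieComp, Finset.mem_filter, Finset.mem_image]
    refine ⟨⟨(blk p hp x, blk q hq x), ?_, rfl⟩, ⟨x, hxC⟩⟩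
    refine ⟨Finset.mem_product.2 ⟨blk_mem p hp x, blk_mem q hq x⟩, ?_⟩
    intro hcontra
    apply hx
    have h1 : blk p hp x = p.1 := congrArg Prod.fst hcontra
    have h2 : blk q hq x = q.1 := congrArg Prod.snd hcontra
    exact Finset.mem_inter.2 ⟨h1 ▸ mem_blk p hp x, h2 ▸ mem_blk q hq x⟩

lemma comp_isTie (p q : TieData S) (hp : IsTie p) (hq : IsTie q) :
    IsTie (tieComp q p) := by
  refine ⟨?_, ?_, ?_⟩
  · intro B hB
    exact (Finset.mem_filter.1 hB).2
  · intro B hB x hxB hx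
    obtain ⟨y, hy, hyB, hBe⟩ := (mem_comp_iff p q hp hq B).1 hB
    rw [comp_fst] at hx
    have hx' := Finset.mem_inter.1 hx
    rw [hBe, Finset.mem_inter] at hxB
    have e1 : blk p hp y = blk p hp x := blk_eq p hp (blk_mem p hp y) hxB.1
    have e2 : blk q hq y = blk q hq x := blk_eq q hq (blk_mem q hq y) hxB.2
    apply hy
    rw [hBe, e1, e2, blk_untied p hp hx'.1, blk_untied q hq hx'.2] at hyB
    exact hyB
  · intro x hx
    rw [comp_fst] at hx
    refine ⟨blk p hp x ∩ blk q hq x,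
      ⟨(mem_comp_iff p q hp hq _).2 ⟨x, hx, Finset.mem_inter.2 ⟨mem_blk p hp x, mem_blk q hq x⟩, rfl⟩,
        Finset.mem_inter.2 ⟨mem_blk p hp x, mem_blk q hq x⟩⟩, ?_⟩
    rintro C ⟨hC, hxC⟩
    obtain ⟨y, hy, hyC, rfl⟩ := (mem_comp_iff p q hp hq C).1 hC
    rw [Finset.mem_inter] at hxC
    rw [← blk_eq p hp (blk_mem p hp y) hxC.1, ← blk_eq q hq (blk_mem q hq y) hxC.2]

lemma blk_comp (p q : TieData S) (hp : IsTie p) (hq : IsTie q) (h : IsTie (tieComp q p)) (x : S) :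
    blk (tieComp q p) h x = blk p hp x ∩ blk q hq x := by
  by_cases hx : x ∈ p.1 ∩ q.1
  · have hx' : x ∈ (tieComp q p).1 := by rw [comp_fst]; exact hx
    have hx'' := Finset.mem_inter.1 hx
    rw [blk_untied _ h hx', comp_fst, blk_untied p hp hx''.1, blk_untied q hq hx''.2]
  · have hx' : x ∉ (tieComp q p).1 := by rw [comp_fst]; exact hx
    have hmem := blk_of_not_mem _ h hx'
    obtain ⟨y, hy, hyB, hBe⟩ := (mem_comp_iff p q hp hq _).1 hmem
    have hxb := mem_blk _ h x
    rw [hBe] at hxb ⊢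
    rw [Finset.mem_inter] at hxb
    rw [← blk_eq p hp (blk_mem p hp y) hxb.1, ← blk_eq q hq (blk_mem q hq y) hxb.2]

lemma mem_blocks_iff (p : TieData S) (hp : IsTie p) (C : Finset S) :
    C ∈ p.2 ↔ ∃ x, x ∉ p.1 ∧ x ∈ C ∧ C = blk p hp x := by
  constructor
  · intro hC
    obtain ⟨x, hx⟩ := hp.1 C hC
    exact ⟨x, hp.2.1 C hC x hx, hx, blk_eq p hp (Finset.mem_union_left _ hC) hx⟩
  · rintro ⟨x, hx1, hx2, rfl⟩
    exact blk_of_not_mem p hp hx1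

lemma e_isTie : IsTie ((Finset.univ, ∅) : TieData S) := by
  refine ⟨?_, ?_, ?_⟩
  · intro B hB; simp at hB
  · intro B hB; simp at hB
  · intro x hx; simp at hx

lemma blk_e (x : S) : blk ((Finset.univ, ∅) : TieData S) e_isTie x = Finset.univ :=
  blk_untied _ _ (Finset.mem_univ x)

end Aux

/-- Ties on a finite set `S`, with the composition `(T₀,Q) ∘ (S₀,P)` given by the
nonempty pairwise intersections, form a monoid with identity `(S, ∅)`. -/
theorem ties_monoid (S : Type*) [Fintype S] [DecidableEq S] :
    -- closure
    (∀ p q : TieData S, IsTie p → IsTie q → IsTie (tieComp q p)) ∧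
    -- associativity
    (∀ p q r : TieData S, IsTie p → IsTie q → IsTie r →
      tieComp r (tieComp q p) = tieComp (tieComp r q) p) ∧
    -- `(S, ∅)` is a two-sided identity
    (∀ p : TieData S, IsTie p →
      tieComp p (Finset.univ, ∅) = p ∧ tieComp (Finset.univ, ∅) p = p) ∧
    IsTie ((Finset.univ, ∅) : TieData S) := by
  refine ⟨comp_isTie, ?_, ?_, e_isTie⟩
  · intro p q r hp hq hr
    have h1 := comp_isTie p q hp hq
    have h2 := comp_isTie q r hq hr
    refine Prod.ext ?_ ?_
    · rw [comp_fst, comp_fst, comp_fst, comp_fst, Finset.inter_assoc]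
    · ext C
      rw [mem_comp_iff (tieComp q p) r h1 hr, mem_comp_iff p (tieComp r q) hp h2]
      constructor
      · rintro ⟨x, hx, hxC, rfl⟩
        rw [comp_fst] at hx
        refine ⟨x, ?_, hxC, ?_⟩
        · rwa [comp_fst, ← Finset.inter_assoc]
        · rw [blk_comp p q hp hq h1, blk_comp q r hq hr h2, Finset.inter_assoc]
      · rintro ⟨x, hx, hxC, rfl⟩
        rw [comp_fst] at hx
        refine ⟨x, ?_, hxC, ?_⟩
        · rwa [comp_fst, Finset.inter_assoc]
        · rw [blk_comp p q hp hq h1, blk_comp q r hq hr h2, Finset.inter_assoc]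
  · intro p hp
    constructor
    · refine Prod.ext ?_ ?_
      · exact (comp_fst _ _).trans (Finset.univ_inter p.1)
      · ext C
        rw [mem_comp_iff (Finset.univ, ∅) p e_isTie hp, mem_blocks_iff p hp C]
        constructor
        · rintro ⟨x, hx, hxC, rfl⟩
          rw [Finset.univ_inter] at hx
          exact ⟨x, hx, hxC, by rw [blk_e, Finset.univ_inter]⟩
        · rintro ⟨x, hx, hxC, rfl⟩
          exact ⟨x, by rwa [Finset.univ_inter], hxC, by rw [blk_e, Finset.univ_inter]⟩
    · refine Prod.ext ?_ ?_
      · exact (comp_fst _ _).trans (Finset.inter_univ p.1)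
      · ext C
        rw [mem_comp_iff p (Finset.univ, ∅) hp e_isTie, mem_blocks_iff p hp C]
        constructor
        · rintro ⟨x, hx, hxC, rfl⟩
          rw [Finset.inter_univ] at hx
          exact ⟨x, hx, hxC, by rw [blk_e, Finset.inter_univ]⟩
        · rintro ⟨x, hx, hxC, rfl⟩
          exact ⟨x, by rwa [Finset.inter_univ], hxC, by rw [blk_e, Finset.inter_univ]⟩
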